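/- arXiv:2202.10009 — 2 statements merged into one kernel-verified Lean document; each statement's English description precedes it below -/
import Mathlib

section
/- Assume that A is an algebra whose commutator operation is not commutative, i.e., there exist congruences γ, δ ∈ Con(A) with [γ,δ] ≠ [δ,γ]. Then some quotient algebra B of A has congruences α, β ∈ Con(B) such that [β,α] = 0 < [α,β]. -/
/-- A (universal-algebraic) signature: a type of operation symbols with arities. -/
structure Sig where
  ops : Type
  arity : ops → ℕ

/-- An algebra for a signature: a carrier set with an interpretation of each
operation symbol. -/
structure Alg (σ : Sig) where
  carrier : Type
  interp : ∀ f : σ.ops, (Fin (σ.arity f) → carrier) → carrier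

/-- Terms over a signature with variables from `V`. -/
inductive Trm (σ : Sig) (V : Type) : Type
  | var : V → Trm σ V
  | op : (f : σ.ops) → (Fin (σ.arity f) → Trm σ V) → Trm σ V

/-- Evaluation of a term in an algebra under an assignment of the variables. -/
def Alg.evalTrm {σ : Sig} (A : Alg σ) {V : Type} (asg : V → A.carrier) :
    Trm σ V → A.carrier
  | .var v => asg v
  | .op f ts => A.interp f fun i => A.evalTrm asg (ts i)

/-- A congruence on an algebra: an equivalence relation compatible with the
basic operations. -/
structure Congruence {σ : Sig} (A : Alg σ) where
  rel : A.carrier → A.carrier → Prop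
  iseqv : Equivalence rel
  compat : ∀ (f : σ.ops) (a b : Fin (σ.arity f) → A.carrier),
    (∀ i, rel (a i) (b i)) → rel (A.interp f a) (A.interp f b)

namespace Congruence

variable {σ : Sig} {A : Alg σ}

theorem ext' {c d : Congruence A} (h : c.rel = d.rel) : c = d := by
  cases c; cases d; cases h; rfl

instance : PartialOrder (Congruence A) where
  le c d := ∀ a b, c.rel a b → d.rel a b
  le_refl c a b h := h
  le_trans c d e h1 h2 a b h := h2 a b (h1 a b h)
  le_antisymm c d h1 h2 :=
    ext' (funext fun a => funext fun b => propext ⟨h1 a b, h2 a b⟩)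

instance : InfSet (Congruence A) where
  sInf S :=
    { rel := fun a b => ∀ c ∈ S, c.rel a b
      iseqv := ⟨fun a c _ => c.iseqv.refl a,
                fun h c hc => c.iseqv.symm (h c hc),
                fun h1 h2 c hc => c.iseqv.trans (h1 c hc) (h2 c hc)⟩
      compat := fun f a b h c hc => c.compat f a b fun i => h i c hc }

/-- The congruences of an algebra form a complete lattice (`⊥` is the equality
congruence, `⊤` is the total congruence, meet is intersection). -/
instance : CompleteLattice (Congruence A) :=
  completeLatticeOfInf _ fun S =>
    ⟨fun c hc a b h => h c hc, fun c hc a b h d hd => hc hd a b h⟩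

end Congruence

/-- `Centralizes S T δ` is the centralizer relation `C(S,T;δ)`: for every
`S,T`-matrix `[[p,q],[r,s]]` (built from a term operation `t`, tuples `a S b`
and `u T v`), if `(p,q) ∈ δ` then `(r,s) ∈ δ`. -/
def Centralizes {σ : Sig} {A : Alg σ} (S T δ : Congruence A) : Prop :=
  ∀ (m n : ℕ) (t : Trm σ (Sum (Fin m) (Fin n)))
    (a b : Fin m → A.carrier) (u v : Fin n → A.carrier),
    (∀ i, S.rel (a i) (b i)) → (∀ j, T.rel (u j) (v j)) →
    δ.rel (A.evalTrm (Sum.elim a u) t) (A.evalTrm (Sum.elim a v) t) →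
    δ.rel (A.evalTrm (Sum.elim b u) t) (A.evalTrm (Sum.elim b v) t)

/-- The commC `[S,T]`: the least congruence `δ` with `C(S,T;δ)`. -/
def commC {σ : Sig} {A : Alg σ} (S T : Congruence A) : Congruence A :=
  sInf {δ | Centralizes S T δ}

/-- The relative commC `[S,T]_ε`: the intersection of all congruences
`γ ≥ ε` with `C(S,T;γ)`. -/
def relCommC {σ : Sig} {A : Alg σ} (S T ε : Congruence A) : Congruence A :=
  sInf {γ | ε ≤ γ ∧ Centralizes S T γ}

/-- The congruence generated by a single pair `(x, y)`. -/
def cgPair {σ : Sig} (A : Alg σ) (x y : A.carrier) : Congruence A :=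
  sInf {c | c.rel x y}

/-- Homomorphisms of algebras. -/
structure UAHom {σ : Sig} (A B : Alg σ) where
  toFun : A.carrier → B.carrier
  map_op : ∀ (f : σ.ops) (a : Fin (σ.arity f) → A.carrier),
    toFun (A.interp f a) = B.interp f (fun i => toFun (a i))

/-- The product of a family of algebras. -/
def prodAlg {σ : Sig} {I : Type} (F : I → Alg σ) : Alg σ where
  carrier := ∀ i, (F i).carrier
  interp f a := fun i => (F i).interp f (fun j => a j i)

/-- A variety: a class of algebras of a fixed signature closed under
homomorphic images, subalgebras (here: isomorphic copies of subalgebras,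
i.e. sources of injective homomorphisms), and arbitrary products. -/
structure Variety (σ : Sig) where
  Mem : Alg σ → Prop
  closed_hom : ∀ {A B : Alg σ}, Mem A →
    (∃ h : UAHom A B, Function.Surjective h.toFun) → Mem B
  closed_sub : ∀ {A B : Alg σ}, Mem A →
    (∃ h : UAHom B A, Function.Injective h.toFun) → Mem B
  closed_prod : ∀ {I : Type} (F : I → Alg σ), (∀ i, Mem (F i)) → Mem (prodAlg F)

/-- The setoid associated with a congruence. -/
def Congruence.setoid {σ : Sig} {A : Alg σ} (c : Congruence A) :
    Setoid A.carrier := ⟨c.rel, c.iseqv⟩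

/-- The quotient algebra of an algebra by a congruence. -/
noncomputable def quotAlg {σ : Sig} (A : Alg σ) (c : Congruence A) : Alg σ where
  carrier := Quotient c.setoid
  interp f a := Quotient.mk c.setoid (A.interp f fun i => (a i).out)

/-- `algOn A α` is the algebra `A(α)`: the subalgebra of `A × A` whose
universe is `α`. -/
def algOn {σ : Sig} (A : Alg σ) (α : Congruence A) : Alg σ where
  carrier := {p : A.carrier × A.carrier // α.rel p.1 p.2}
  interp f a := ⟨(A.interp f fun i => (a i).1.1, A.interp f fun i => (a i).1.2),
    α.compat f _ _ fun i => (a i).2⟩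

/-- The kernel of the first coordinate projection of `A(α)`. -/
def eta1 {σ : Sig} (A : Alg σ) (α : Congruence A) : Congruence (algOn A α) where
  rel p q := p.1.1 = q.1.1
  iseqv := ⟨fun _ => rfl, Eq.symm, Eq.trans⟩
  compat f a b h := congrArg (A.interp f) (funext h)

/-- The kernel of the second coordinate projection of `A(α)`. -/
def eta2 {σ : Sig} (A : Alg σ) (α : Congruence A) : Congruence (algOn A α) where
  rel p q := p.1.2 = q.1.2
  iseqv := ⟨fun _ => rfl, Eq.symm, Eq.trans⟩
  compat f a b h := congrArg (A.interp f) (funext h)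

/-- The congruence `Δ_{α,β}` on `A(α)` generated by the `β`-diagonal pairs. -/
def diagDelta {σ : Sig} (A : Alg σ) (α β : Congruence A) :
    Congruence (algOn A α) :=
  sInf {c | ∀ x z : A.carrier, β.rel x z →
    c.rel ⟨(x, x), α.iseqv.refl x⟩ ⟨(z, z), α.iseqv.refl z⟩}

/-- A pentagon (five-element sublattice isomorphic to `N₅`) in the congruence
lattice with bottom `z`, side element `β`, critical chain `δ < θ`, and top `α`. -/
def IsPentagon {σ : Sig} {A : Alg σ} (z β δ θ α : Congruence A) : Prop :=
  δ < θ ∧ β ⊓ θ = z ∧ β ⊓ δ = z ∧ β ⊔ δ = α ∧ β ⊔ θ = α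

/-- Two congruences permute: `c ∘ d = d ∘ c`. -/
def Permutes {σ : Sig} {A : Alg σ} (c d : Congruence A) : Prop :=
  ∀ a b : A.carrier, (∃ x, c.rel a x ∧ d.rel x b) ↔ (∃ x, d.rel a x ∧ c.rel x b)

/-- `T` is a Taylor term for the variety `V`: an idempotent term satisfying an
`i`-th place Taylor identity for every place `i`. -/
def IsTaylorTrm {σ : Sig} (V : Variety σ) {n : ℕ} (T : Trm σ (Fin n)) : Prop :=
  0 < n ∧
  (∀ A : Alg σ, V.Mem A → ∀ c : A.carrier, A.evalTrm (fun _ => c) T = c) ∧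
  (∀ i : Fin n, ∃ w z : Fin n → Bool, w i ≠ z i ∧
    ∀ A : Alg σ, V.Mem A → ∀ x y : A.carrier,
      A.evalTrm (fun j => cond (w j) x y) T = A.evalTrm (fun j => cond (z j) x y) T)

/-- `V` has a Taylor term. -/
def HasTaylorTrm {σ : Sig} (V : Variety σ) : Prop :=
  ∃ (n : ℕ) (T : Trm σ (Fin n)), IsTaylorTrm V T

/-- A congruence is abelian if `[α,α] = 0`. -/
def IsAbelianCong {σ : Sig} {A : Alg σ} (α : Congruence A) : Prop :=
  commC α α = ⊥

/-- `d` is a weak difference term for `V`: `d(a,a,b) = b` and `d(a,b,b) = a`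
whenever the pair `(a,b)` lies in an abelian congruence of a member of `V`. -/
def IsWeakDifferenceTrm {σ : Sig} (V : Variety σ) (d : Trm σ (Fin 3)) : Prop :=
  ∀ A : Alg σ, V.Mem A → ∀ α : Congruence A, IsAbelianCong α →
    ∀ a b : A.carrier, α.rel a b →
      A.evalTrm ![a, a, b] d = b ∧ A.evalTrm ![a, b, b] d = a

/-- `d` is a difference term for `V`: `V ⊨ d(x,x,y) ≈ y` and `d(a,b,b) = a`
whenever the pair `(a,b)` lies in an abelian congruence of a member of `V`. -/
def IsDifferenceTrm {σ : Sig} (V : Variety σ) (d : Trm σ (Fin 3)) : Prop :=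
  (∀ A : Alg σ, V.Mem A → ∀ a b : A.carrier, A.evalTrm ![a, a, b] d = b) ∧
  (∀ A : Alg σ, V.Mem A → ∀ α : Congruence A, IsAbelianCong α →
    ∀ a b : A.carrier, α.rel a b → A.evalTrm ![a, b, b] d = a)

/-- The commC is left distributive throughout `V`. -/
def CommLeftDistrib {σ : Sig} (V : Variety σ) : Prop :=
  ∀ A : Alg σ, V.Mem A → ∀ x y z : Congruence A,
    commC (x ⊔ y) z = commC x z ⊔ commC y z

/-- The commC is right distributive throughout `V`. -/
def CommRightDistrib {σ : Sig} (V : Variety σ) : Prop :=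
  ∀ A : Alg σ, V.Mem A → ∀ x y z : Congruence A,
    commC x (y ⊔ z) = commC x y ⊔ commC x z

/-- The commC is commutative throughout `V`. -/
def CommutativeCommutator {σ : Sig} (V : Variety σ) : Prop :=
  ∀ A : Alg σ, V.Mem A → ∀ x y : Congruence A, commC x y = commC y x

/-- `V` is congruence modular. -/
def CongruenceModular {σ : Sig} (V : Variety σ) : Prop :=
  ∀ A : Alg σ, V.Mem A → IsModularLattice (Congruence A)

section Aux

variable {σ : Sig} {A : Alg σ}

/-- Term evaluation is compatible with congruences. -/
theorem evalTrm_congr (c : Congruence A) {V : Type} (asg asg' : V → A.carrier)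
    (h : ∀ v, c.rel (asg v) (asg' v)) (t : Trm σ V) :
    c.rel (A.evalTrm asg t) (A.evalTrm asg' t) := by
  induction t with
  | var v => exact h v
  | op f ts ih => exact c.compat f _ _ fun i => ih i

/-- The equality congruence. -/
def eqCong (A : Alg σ) : Congruence A where
  rel := Eq
  iseqv := ⟨fun _ => rfl, Eq.symm, Eq.trans⟩
  compat f a b h := congrArg (A.interp f) (funext h)

theorem bot_rel_iff (a b : A.carrier) : (⊥ : Congruence A).rel a b ↔ a = b :=
  ⟨fun h => (bot_le : (⊥ : Congruence A) ≤ eqCong A) a b h,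
   fun h => h ▸ (⊥ : Congruence A).iseqv.refl a⟩

theorem centralizes_commC (S T : Congruence A) : Centralizes S T (commC S T) :=
  fun m n t a b u v ha hu hpq d hd => hd m n t a b u v ha hu (hpq d hd)

theorem commC_le {S T d : Congruence A} (h : Centralizes S T d) : commC S T ≤ d :=
  sInf_le h

theorem centralizes_left (S T : Congruence A) : Centralizes S T S := by
  intro m n t a b u v ha _ hpq
  refine S.iseqv.trans (evalTrm_congr S _ _ ?_ t)
    (S.iseqv.trans hpq (evalTrm_congr S _ _ ?_ t)) <;>
    intro x <;> cases x with
  | inl i => first | exact S.iseqv.symm (ha i) | exact ha i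
  | inr j => exact S.iseqv.refl _

theorem centralizes_right (S T : Congruence A) : Centralizes S T T := by
  intro m n t a b u v _ hu _
  refine evalTrm_congr T _ _ ?_ t
  intro x; cases x with
  | inl i => exact T.iseqv.refl _
  | inr j => exact hu j

theorem commC_le_left (S T : Congruence A) : commC S T ≤ S := commC_le (centralizes_left S T)
theorem commC_le_right (S T : Congruence A) : commC S T ≤ T := commC_le (centralizes_right S T)

theorem out_rel (c : Congruence A) (x : A.carrier) :
    c.rel (Quotient.mk c.setoid x).out x := by
  have h : Quotient.mk c.setoid ((Quotient.mk c.setoid x).out) = Quotient.mk c.setoid x :=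
    Quotient.out_eq _
  exact Quotient.exact h

/-- Evaluation in a quotient algebra. -/
theorem evalTrm_quot (c : Congruence A) {V : Type} (asg : V → A.carrier) (t : Trm σ V) :
    (quotAlg A c).evalTrm (fun v => Quotient.mk c.setoid (asg v)) t
      = Quotient.mk c.setoid (A.evalTrm asg t) := by
  induction t with
  | var v => rfl
  | op f ts ih =>
    refine Quotient.sound (c.compat f _ _ fun i => ?_)
    have h1 : Quotient.mk c.setoid
        (((quotAlg A c).evalTrm (fun v => Quotient.mk c.setoid (asg v)) (ts i)).out)
        = Quotient.mk c.setoid (A.evalTrm asg (ts i)) := by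
      exact (Quotient.out_eq _).trans (ih i)
    exact Quotient.exact h1

/-- Lifting a congruence `G ≥ c` to the quotient by `c`. -/
def liftCong (c G : Congruence A) (h : c ≤ G) : Congruence (quotAlg A c) where
  rel p q := G.rel p.out q.out
  iseqv := ⟨fun _ => G.iseqv.refl _, fun h => G.iseqv.symm h,
            fun h1 h2 => G.iseqv.trans h1 h2⟩
  compat f a b hab := by
    have k : ∀ (x : Fin (σ.arity f) → (quotAlg A c).carrier),
        c.rel (((quotAlg A c).interp f x).out) (A.interp f fun i => (x i).out) := by
      intro x
      have h1 : Quotient.mk c.setoid (((quotAlg A c).interp f x).out)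
          = Quotient.mk c.setoid (A.interp f fun i => (x i).out) := Quotient.out_eq _
      exact Quotient.exact h1
    exact G.iseqv.trans (h _ _ (k a))
      (G.iseqv.trans (G.compat f _ _ hab) (G.iseqv.symm (h _ _ (k b))))

theorem liftCong_rel (c G : Congruence A) (h : c ≤ G) (x y : A.carrier) :
    (liftCong c G h).rel (Quotient.mk c.setoid x) (Quotient.mk c.setoid y) ↔ G.rel x y := by
  constructor
  · intro hr
    exact G.iseqv.trans (G.iseqv.symm (h _ _ (out_rel c x)))
      (G.iseqv.trans hr (h _ _ (out_rel c y)))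
  · intro hr
    exact G.iseqv.trans (h _ _ (out_rel c x))
      (G.iseqv.trans hr (G.iseqv.symm (h _ _ (out_rel c y))))

theorem elim_mk (c : Congruence A) {m n : ℕ} (a : Fin m → A.carrier) (u : Fin n → A.carrier) :
    (fun x => Quotient.mk c.setoid (Sum.elim a u x))
      = Sum.elim (fun i => Quotient.mk c.setoid (a i)) (fun j => Quotient.mk c.setoid (u j)) :=
  funext fun x => by cases x <;> rfl

/-- The main asymmetry lemma, for a fixed orientation. -/
theorem key_asym (G D : Congruence A) (hGD : ¬ commC G D ≤ commC D G) :
    ∃ (c : Congruence A) (α β : Congruence (quotAlg A c)),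
      commC β α = ⊥ ∧ ⊥ < commC α β := by
  set c := commC D G with hc
  have hcG : c ≤ G := commC_le_right D G
  have hcD : c ≤ D := commC_le_left D G
  set α := liftCong c G hcG with hα
  set β := liftCong c D hcD with hβ
  refine ⟨c, α, β, ?_, ?_⟩
  · -- commC β α = ⊥
    refine le_antisymm (commC_le ?_) bot_le
    intro m n t a b u v ha hu hpq
    -- replace a, b, u, v by mk of their outs
    have ea : a = fun i => Quotient.mk c.setoid ((a i).out) :=
      funext fun i => (Quotient.out_eq _).symm
    have eb : b = fun i => Quotient.mk c.setoid ((b i).out) :=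
      funext fun i => (Quotient.out_eq _).symm
    have eu : u = fun j => Quotient.mk c.setoid ((u j).out) :=
      funext fun j => (Quotient.out_eq _).symm
    have ev : v = fun j => Quotient.mk c.setoid ((v j).out) :=
      funext fun j => (Quotient.out_eq _).symm
    have eval1 : ∀ (x : Fin m → A.carrier) (y : Fin n → A.carrier),
        (quotAlg A c).evalTrm
          (Sum.elim (fun i => Quotient.mk c.setoid (x i)) (fun j => Quotient.mk c.setoid (y j))) t
        = Quotient.mk c.setoid (A.evalTrm (Sum.elim x y) t) := by
      intro x y; exact (congrArg (fun g : _ → (quotAlg A c).carrier => (quotAlg A c).evalTrm g t) (elim_mk c x y)).symm.trans (evalTrm_quot c _ t)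
    rw [ea, eu, ev, bot_rel_iff, eval1, eval1] at hpq
    rw [eb, eu, ev, bot_rel_iff, eval1, eval1]
    apply Quotient.sound
    exact centralizes_commC D G m n t _ _ _ _ ha hu (Quotient.exact hpq)
  · -- ⊥ < commC α β
    refine lt_of_le_of_ne bot_le (fun hEq => hGD ?_)
    rw [hc]
    refine commC_le ?_
    intro m n t a b u v ha hu hpq
    have hcent : Centralizes α β ⊥ := hEq ▸ centralizes_commC α β
    have ha' : ∀ i, α.rel (Quotient.mk c.setoid (a i)) (Quotient.mk c.setoid (b i)) :=
      fun i => (liftCong_rel c G hcG _ _).mpr (ha i)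
    have hu' : ∀ j, β.rel (Quotient.mk c.setoid (u j)) (Quotient.mk c.setoid (v j)) :=
      fun j => (liftCong_rel c D hcD _ _).mpr (hu j)
    have eval1 : ∀ (x : Fin m → A.carrier) (y : Fin n → A.carrier),
        (quotAlg A c).evalTrm
          (Sum.elim (fun i => Quotient.mk c.setoid (x i)) (fun j => Quotient.mk c.setoid (y j))) t
        = Quotient.mk c.setoid (A.evalTrm (Sum.elim x y) t) := by
      intro x y; exact (congrArg (fun g : _ → (quotAlg A c).carrier => (quotAlg A c).evalTrm g t) (elim_mk c x y)).symm.trans (evalTrm_quot c _ t)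
    have hres := hcent m n t _ _ _ _ ha' hu'
      ((bot_rel_iff _ _).mpr (by rw [eval1, eval1]; exact Quotient.sound hpq))
    rw [bot_rel_iff, eval1, eval1] at hres
    exact Quotient.exact hres

end Aux

/-- If the commutator operation of an algebra `A` is not commutative, then
some quotient algebra of `A` has congruences `α, β` with `[β,α] = 0 < [α,β]`. -/
theorem asymmetry_in_quotient {σ : Sig} (A : Alg σ)
    (γ δ : Congruence A) (h : commC γ δ ≠ commC δ γ) :
    ∃ (c : Congruence A) (α β : Congruence (quotAlg A c)),
      commC β α = ⊥ ∧ ⊥ < commC α β := by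
  by_cases hle : commC γ δ ≤ commC δ γ
  · have hne : ¬ commC δ γ ≤ commC γ δ := fun h2 => h (le_antisymm hle h2)
    exact key_asym δ γ hne
  · exact key_asym γ δ hle
end

section
/- Let A be an algebra and let {0', β, δ, θ, α} be a pentagon sublattice of Con(A) (with δ < θ, β ∧ θ = β ∧ δ = 0', β ∨ δ = β ∨ θ = α). Then C(β,θ;δ) holds if and only if C(α,θ;δ) holds. -/
namespace PentAux

variable {σ : Sig} {A : Alg σ}

/-- Evaluation of terms is compatible with any congruence. -/
lemma eval_compat (c : Congruence A) {V : Type} (asg1 asg2 : V → A.carrier)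
    (h : ∀ v, c.rel (asg1 v) (asg2 v)) (t : Trm σ V) :
    c.rel (A.evalTrm asg1 t) (A.evalTrm asg2 t) := by
  induction t with
  | var v => exact h v
  | op f ts ih => exact c.compat f _ _ fun i => ih i

/-- Chains of `S`-or-`S'` steps. -/
def jrel (S S' : Congruence A) : A.carrier → A.carrier → Prop :=
  Relation.ReflTransGen (fun x y => S.rel x y ∨ S'.rel x y)

/-- Generic "one coordinate at a time" chain lemma. -/
lemma tuple_chain {n : ℕ} (r : A.carrier → A.carrier → Prop)
    (P : (Fin n → A.carrier) → (Fin n → A.carrier) → Prop)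
    (hP : ∀ (c : Fin n → A.carrier) (i : Fin n) (x y : A.carrier), r x y →
      P (Function.update c i x) (Function.update c i y))
    (a b : Fin n → A.carrier) (h : ∀ i, Relation.ReflTransGen r (a i) (b i)) :
    Relation.ReflTransGen P a b := by
  have upd : ∀ (c : Fin n → A.carrier) (i : Fin n) (x y : A.carrier),
      Relation.ReflTransGen r x y →
      Relation.ReflTransGen P (Function.update c i x) (Function.update c i y) := by
    intro c i x y hxy
    induction hxy with
    | refl => exact Relation.ReflTransGen.refl
    | tail _ hstep ih => exact ih.tail (hP c i _ _ hstep)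
  -- mix k : b below k, a at/above k
  set mix : ℕ → Fin n → A.carrier := fun k i => if i.val < k then b i else a i with hmix
  have key : ∀ k : ℕ, Relation.ReflTransGen P a (mix k) := by
    intro k
    induction k with
    | zero =>
      have : mix 0 = a := by funext i; simp [hmix]
      rw [this]
    | succ k ih =>
      by_cases hk : k < n
      · have h1 : mix k = Function.update (mix k) ⟨k, hk⟩ (a ⟨k, hk⟩) := by
          funext i
          rcases eq_or_ne i ⟨k, hk⟩ with hi | hi
          · subst hi; simp [hmix]
          · rw [Function.update_of_ne hi]
        have h2 : mix (k + 1) = Function.update (mix k) ⟨k, hk⟩ (b ⟨k, hk⟩) := by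
          funext i
          rcases eq_or_ne i ⟨k, hk⟩ with hi | hi
          · subst hi; simp [hmix]
          · rw [Function.update_of_ne hi]
            have : i.val ≠ k := fun hv => hi (Fin.ext hv)
            simp only [hmix]
            by_cases h' : i.val < k
            · rw [if_pos h', if_pos (Nat.lt_succ_of_lt h')]
            · rw [if_neg h', if_neg (by omega)]
        have step : Relation.ReflTransGen P (mix k) (mix (k + 1)) := by
          rw [h2]
          nth_rewrite 1 [h1]
          exact upd _ _ _ _ (h ⟨k, hk⟩)
        exact ih.trans step
      · have : mix (k + 1) = mix k := by
          funext i
          have hi := i.isLt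
          simp only [hmix]
          rw [if_pos (by omega), if_pos (by omega)]
        rw [this]; exact ih
  have hb : mix n = b := by
    funext i; simp [hmix, i.isLt]
  have := key n
  rwa [hb] at this

end PentAux

/-- In any pentagon `{0', β, δ, θ, α}` of the congruence lattice of an
algebra `A`, `C(β,θ;δ)` holds if and only if `C(α,θ;δ)` holds. -/
theorem pentagon_centrality_transfer {σ : Sig} (A : Alg σ)
    (z β δ θ α : Congruence A) (hpent : IsPentagon z β δ θ α) :
    Centralizes β θ δ ↔ Centralizes α θ δ := by
  obtain ⟨hlt, hbt, hbd, hbda, hbta⟩ := hpent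
  constructor
  · intro hC m n t a b u v hab huv hpq
    -- the join congruence whose relation is `jrel β δ`
    have hsymm : Symmetric (fun x y => β.rel x y ∨ δ.rel x y) := by
      intro x y h
      rcases h with h | h
      · exact Or.inl (β.iseqv.symm h)
      · exact Or.inr (δ.iseqv.symm h)
    let J : Congruence A :=
      { rel := PentAux.jrel β δ
        iseqv := ⟨fun _ => Relation.ReflTransGen.refl,
                  fun h => (@Relation.ReflTransGen.stdSymm _ _ ⟨hsymm⟩).symm _ _ h,
                  fun h1 h2 => h1.trans h2⟩
        compat := by
          intro f p q hpq'
          have hchain := PentAux.tuple_chain (A := A)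
            (fun x y => β.rel x y ∨ δ.rel x y)
            (fun x y => PentAux.jrel β δ (A.interp f x) (A.interp f y))
            (by
              intro c i x y hxy
              refine Relation.ReflTransGen.single ?_
              rcases hxy with h | h
              · refine Or.inl (β.compat f _ _ fun j => ?_)
                rcases eq_or_ne j i with hj | hj
                · subst hj; simpa using h
                · rw [Function.update_of_ne hj, Function.update_of_ne hj]
                  exact β.iseqv.refl _
              · refine Or.inr (δ.compat f _ _ fun j => ?_)
                rcases eq_or_ne j i with hj | hj
                · subst hj; simpa using h
                · rw [Function.update_of_ne hj, Function.update_of_ne hj]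
                  exact δ.iseqv.refl _)
            p q hpq'
          -- collapse the chain of jrel-statements
          clear hpq'
          induction hchain with
          | refl => exact Relation.ReflTransGen.refl
          | tail _ hstep ih => exact ih.trans hstep }
    have hβJ : β ≤ J := fun x y h => Relation.ReflTransGen.single (Or.inl h)
    have hδJ : δ ≤ J := fun x y h => Relation.ReflTransGen.single (Or.inr h)
    have hαJ : α ≤ J := by
      rw [← hbda]; exact sup_le hβJ hδJ
    have hjr : ∀ i, PentAux.jrel β δ (a i) (b i) := fun i => hαJ _ _ (hab i)
    -- chain of tuples, each step uniformly β or uniformly δ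
    have hchain := PentAux.tuple_chain (A := A)
      (fun x y => β.rel x y ∨ δ.rel x y)
      (fun x y : Fin m → A.carrier =>
        (∀ i, β.rel (x i) (y i)) ∨ (∀ i, δ.rel (x i) (y i)))
      (by
        intro c i x y hxy
        rcases hxy with h | h
        · refine Or.inl fun j => ?_
          rcases eq_or_ne j i with hj | hj
          · subst hj; simpa using h
          · rw [Function.update_of_ne hj, Function.update_of_ne hj]
            exact β.iseqv.refl _
        · refine Or.inr fun j => ?_
          rcases eq_or_ne j i with hj | hj
          · subst hj; simpa using h
          · rw [Function.update_of_ne hj, Function.update_of_ne hj]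
            exact δ.iseqv.refl _)
      a b hjr
    clear hjr hab
    induction hchain with
    | refl => exact hpq
    | tail _ hstep ih =>
      rcases hstep with h | h
      · exact hC m n t _ _ u v h huv ih
      · -- a δ-step: transfer across δ using compatibility of evaluation
        rename_i c b' _
        have h1 : δ.rel (A.evalTrm (Sum.elim b' u) t) (A.evalTrm (Sum.elim c u) t) := by
          refine PentAux.eval_compat δ _ _ (fun w => ?_) t
          rcases w with i | j
          · exact δ.iseqv.symm (h i)
          · exact δ.iseqv.refl _
        have h2 : δ.rel (A.evalTrm (Sum.elim c v) t) (A.evalTrm (Sum.elim b' v) t) := by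
          refine PentAux.eval_compat δ _ _ (fun w => ?_) t
          rcases w with i | j
          · exact h i
          · exact δ.iseqv.refl _
        exact δ.iseqv.trans (δ.iseqv.trans h1 ih) h2
  · intro hC m n t a b u v hab huv hpq
    have hβα : β ≤ α := by rw [← hbda]; exact le_sup_left
    exact hC m n t a b u v (fun i => hβα _ _ (hab i)) huv hpq
end
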